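/- arXiv:1005.4210 — 2 statements merged into one kernel-verified Lean document; each statement's English description precedes it below -/
import Mathlib

section
/- Let ψ be a slow modulus of continuity, i.e., ∫_s^2 ψ(t)/t² dt ≤ c_ψ·ψ(s)/s for all s ∈ (0,2]. Let h : ℝ → [0,∞) be continuous with |h(x) − h(y)| ≤ K·ψ(|x−y|), and let θ be a point where h(θ) > 0. Then for every 0 < s ≤ λ where λ := ψ*(h(θ)/(2K)), we have (1/h(θ))·∫_s^λ |h(θ+t)·h(θ−t) − h(θ)²|/t² dt ≤ C·ψ(s)/s for a constant C depending only on c_ψ and K. -/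
/-- Let ψ be a slow modulus of continuity and h nonnegative, continuous and
ψ-Lipschitz with constant K. If h(θ) > 0 then, with λ := ψ*(h(θ)/(2K)), for every
0 < s ≤ λ one has (1/h(θ))·∫_s^λ |h(θ+t)·h(θ−t) − h(θ)²|/t² dt ≤ C·ψ(s)/s,
where C depends only on c_ψ and K. -/
theorem stmt_12 (ψ : ℝ → ℝ) (cψ K : ℝ) (h : ℝ → ℝ)
    (hmono : MonotoneOn ψ (Set.Icc 0 2))
    (hcont : ContinuousOn ψ (Set.Icc 0 2))
    (h0 : ψ 0 = 0) (h1 : ψ 1 = 1)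
    (hdec : ∀ s t : ℝ, 0 < s → s ≤ t → t ≤ 2 → ψ t / t ≤ ψ s / s)
    (hslow : ∀ s : ℝ, 0 < s → s ≤ 2 →
      (∫ t in s..(2:ℝ), ψ t / t ^ 2) ≤ cψ * ψ s / s)
    (hK : 0 < K) (hcψ : 0 < cψ)
    (hhc : Continuous h) (hhnn : ∀ x, 0 ≤ h x)
    (hlip : ∀ x y : ℝ, |h x - h y| ≤ K * ψ |x - y|) :
    ∃ C : ℝ, 0 < C ∧ ∀ θ : ℝ, 0 < h θ →
      ∀ s : ℝ, 0 < s →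
        s ≤ sInf {u : ℝ | u ∈ Set.Icc (0:ℝ) 1 ∧ ψ u = h θ / (2 * K)} →
        (1 / h θ) *
            ∫ t in s..(sInf {u : ℝ | u ∈ Set.Icc (0:ℝ) 1 ∧ ψ u = h θ / (2 * K)}),
              |h (θ + t) * h (θ - t) - (h θ) ^ 2| / t ^ 2 ≤
          C * ψ s / s := by
  have hψnn : ∀ t : ℝ, 0 ≤ t → t ≤ 2 → 0 ≤ ψ t := by
    intro t ht ht2
    have := hmono (Set.mem_Icc.2 ⟨le_refl 0, by norm_num⟩) (Set.mem_Icc.2 ⟨ht, ht2⟩) ht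
    linarith [h0 ▸ this]
  have hintψ : ∀ a b : ℝ, 0 < a → a ≤ b → b ≤ 2 →
      IntervalIntegrable (fun t => ψ t / t ^ 2) MeasureTheory.volume a b := by
    intro a b ha hab hb2
    have hsub : Set.uIcc a b ⊆ Set.Icc 0 2 := by
      rw [Set.uIcc_of_le hab]
      exact Set.Icc_subset_Icc (le_of_lt ha) hb2
    refine ContinuousOn.intervalIntegrable ?_
    exact (hcont.mono hsub).div ((continuous_pow 2).continuousOn) fun t ht => by
      rw [Set.uIcc_of_le hab] at ht
      exact pow_ne_zero 2 (ne_of_gt (lt_of_lt_of_le ha ht.1))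
  refine ⟨5/2 * K * cψ, by positivity, ?_⟩
  intro θ hθ s hs hsl
  set S : Set ℝ := {u : ℝ | u ∈ Set.Icc (0:ℝ) 1 ∧ ψ u = h θ / (2 * K)} with hSdef
  set lam := sInf S with hlamdef
  have hlampos : 0 < lam := lt_of_lt_of_le hs hsl
  have hSne : S.Nonempty := by
    rcases Set.eq_empty_or_nonempty S with he | hne
    · exfalso; rw [hlamdef, he, Real.sInf_empty] at hlampos; linarith
    · exact hne
  have hSclosed : IsClosed S := by
    have : S = Set.Icc (0:ℝ) 1 ∩ ψ ⁻¹' {h θ / (2 * K)} := by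
      ext u; simp [hSdef]
    rw [this]
    exact ContinuousOn.preimage_isClosed_of_isClosed
      (hcont.mono (Set.Icc_subset_Icc le_rfl (by norm_num))) isClosed_Icc isClosed_singleton
  have hSbdd : BddBelow S := ⟨0, fun u hu => hu.1.1⟩
  have hlamS : lam ∈ S := hSclosed.csInf_mem hSne hSbdd
  have hlam1 : lam ≤ 1 := hlamS.1.2
  have hψlam : ψ lam = h θ / (2 * K) := hlamS.2
  have hc := hhnn θ
  -- pointwise bound
  have hpt : ∀ t ∈ Set.Icc s lam,
      |h (θ + t) * h (θ - t) - (h θ) ^ 2| / t ^ 2 ≤ (5/2 * K * h θ) * (ψ t / t ^ 2) := by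
    intro t ht
    have htpos : 0 < t := lt_of_lt_of_le hs ht.1
    have ht2 : t ≤ 2 := le_trans ht.2 (by linarith)
    have hψt : 0 ≤ ψ t := hψnn t (le_of_lt htpos) ht2
    have hψtlam : ψ t ≤ ψ lam :=
      hmono (Set.mem_Icc.2 ⟨le_of_lt htpos, ht2⟩)
        (Set.mem_Icc.2 ⟨le_of_lt hlampos, by linarith⟩) ht.2
    have hKψ : K * ψ t ≤ h θ / 2 := by
      have hA : K * ψ t ≤ K * (h θ / (2*K)) := by rw [← hψlam]; nlinarith
      have hB : K * (h θ / (2*K)) = h θ / 2 := by field_simp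
      linarith
    have ha : |h (θ + t) - h θ| ≤ K * ψ t := by
      have := hlip (θ + t) θ
      simpa [abs_of_pos htpos] using this
    have hb : |h (θ - t) - h θ| ≤ K * ψ t := by
      have := hlip (θ - t) θ
      have he : |θ - t - θ| = t := by
        rw [show θ - t - θ = -t by ring, abs_neg, abs_of_pos htpos]
      rwa [he] at this
    have haub : h (θ + t) ≤ 3/2 * h θ := by
      have := abs_le.1 ha
      linarith [this.2]
    have key : |h (θ + t) * h (θ - t) - (h θ) ^ 2| ≤ 5/2 * K * h θ * ψ t := by
      have hdecomp : h (θ + t) * h (θ - t) - (h θ) ^ 2 =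
          h (θ + t) * (h (θ - t) - h θ) + h θ * (h (θ + t) - h θ) := by ring
      calc |h (θ + t) * h (θ - t) - (h θ) ^ 2|
          = |h (θ + t) * (h (θ - t) - h θ) + h θ * (h (θ + t) - h θ)| := by rw [hdecomp]
        _ ≤ |h (θ + t) * (h (θ - t) - h θ)| + |h θ * (h (θ + t) - h θ)| := abs_add_le _ _
        _ = h (θ + t) * |h (θ - t) - h θ| + h θ * |h (θ + t) - h θ| := by
            rw [abs_mul, abs_mul, abs_of_nonneg (hhnn _), abs_of_nonneg hc]
        _ ≤ (3/2 * h θ) * (K * ψ t) + h θ * (K * ψ t) := by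
            have hx1 : h (θ + t) * |h (θ - t) - h θ| ≤ (3/2 * h θ) * (K * ψ t) :=
              mul_le_mul haub hb (abs_nonneg _) (by positivity)
            have hx2 : h θ * |h (θ + t) - h θ| ≤ h θ * (K * ψ t) :=
              mul_le_mul_of_nonneg_left ha hc
            linarith
        _ = 5/2 * K * h θ * ψ t := by ring
    calc |h (θ + t) * h (θ - t) - (h θ) ^ 2| / t ^ 2 ≤ (5/2 * K * h θ * ψ t) / t ^ 2 := by
          gcongr
      _ = (5/2 * K * h θ) * (ψ t / t ^ 2) := by ring
  -- integrability of LHS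
  have hintL : IntervalIntegrable (fun t => |h (θ + t) * h (θ - t) - (h θ) ^ 2| / t ^ 2)
      MeasureTheory.volume s lam := by
    refine ContinuousOn.intervalIntegrable ?_
    refine ContinuousOn.div ?_ ((continuous_pow 2).continuousOn) ?_
    · exact (((hhc.comp (continuous_const.add continuous_id)).mul
        (hhc.comp (continuous_const.sub continuous_id))).sub continuous_const).abs.continuousOn
    · intro t ht
      rw [Set.uIcc_of_le hsl] at ht
      exact pow_ne_zero 2 (ne_of_gt (lt_of_lt_of_le hs ht.1))
  have hintR : IntervalIntegrable (fun t => (5/2 * K * h θ) * (ψ t / t ^ 2))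
      MeasureTheory.volume s lam :=
    (hintψ s lam hs hsl (by linarith)).const_mul _
  have hI : (∫ t in s..lam, |h (θ + t) * h (θ - t) - (h θ) ^ 2| / t ^ 2) ≤
      (5/2 * K * h θ) * ∫ t in s..lam, ψ t / t ^ 2 := by
    rw [← intervalIntegral.integral_const_mul]
    refine intervalIntegral.integral_mono_on hsl hintL hintR ?_
    exact hpt
  have hI2 : (∫ t in s..lam, ψ t / t ^ 2) ≤ ∫ t in s..(2:ℝ), ψ t / t ^ 2 := by
    have hsplit := intervalIntegral.integral_add_adjacent_intervals
      (hintψ s lam hs hsl (by linarith)) (hintψ lam 2 hlampos (by linarith) le_rfl)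
    have hnn : 0 ≤ ∫ t in lam..(2:ℝ), ψ t / t ^ 2 := by
      refine intervalIntegral.integral_nonneg (by linarith) ?_
      intro u hu
      have hu0 : 0 < u := lt_of_lt_of_le hlampos hu.1
      have := hψnn u (le_of_lt hu0) hu.2
      positivity
    linarith
  have hs2 : s ≤ 2 := by linarith
  have hslow' := hslow s hs hs2
  have hfinal : (∫ t in s..lam, |h (θ + t) * h (θ - t) - (h θ) ^ 2| / t ^ 2) ≤
      (5/2 * K * h θ) * (cψ * ψ s / s) := by
    calc (∫ t in s..lam, |h (θ + t) * h (θ - t) - (h θ) ^ 2| / t ^ 2)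
        ≤ (5/2 * K * h θ) * ∫ t in s..lam, ψ t / t ^ 2 := hI
      _ ≤ (5/2 * K * h θ) * (cψ * ψ s / s) := by
          refine mul_le_mul_of_nonneg_left (le_trans hI2 hslow') (by positivity)
  have hθne : h θ ≠ 0 := ne_of_gt hθ
  calc (1 / h θ) * ∫ t in s..lam, |h (θ + t) * h (θ - t) - (h θ) ^ 2| / t ^ 2
      ≤ (1 / h θ) * ((5/2 * K * h θ) * (cψ * ψ s / s)) := by
        refine mul_le_mul_of_nonneg_left hfinal (by positivity)
    _ = 5/2 * K * cψ * ψ s / s := by field_simp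
end

section
/- Let ψ be a modulus of continuity, K ≥ 1, and h : circle → [0,∞) continuous with h ≤ 2K and ψ-Lipschitz with constant K. If ξ ∈ 𝕋 and λ := ψ*(h(ξ)/(2K)) > 0, then for all ζ ∈ 𝕋 with |ζ − ξ| ≥ λ and h(ζ) ≥ h(ξ), one has log(h(ζ)/h(ξ)) ≤ log(|ξ−ζ|/(2λ) + 1). -/
/-- Let ψ be a modulus of continuity, K ≥ 1, and h : 𝕋 → [0,∞) continuous with
h ≤ 2K and ψ-Lipschitz with constant K. If ξ ∈ 𝕋 and λ := ψ*(h(ξ)/(2K)) > 0,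
then for all ζ ∈ 𝕋 with |ζ − ξ| ≥ λ and h(ζ) ≥ h(ξ):
log(h(ζ)/h(ξ)) ≤ log(|ξ−ζ|/(2λ) + 1). -/
theorem stmt_15 (ψ : ℝ → ℝ) (K : ℝ) (h : ℂ → ℝ)
    (hmono : MonotoneOn ψ (Set.Icc 0 2))
    (hcont : ContinuousOn ψ (Set.Icc 0 2))
    (h0 : ψ 0 = 0) (h1 : ψ 1 = 1)
    (hdec : ∀ s t : ℝ, 0 < s → s ≤ t → t ≤ 2 → ψ t / t ≤ ψ s / s)
    (hK : 1 ≤ K)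
    (hhc : ContinuousOn h (Metric.sphere (0:ℂ) 1))
    (hhnn : ∀ z ∈ Metric.sphere (0:ℂ) 1, 0 ≤ h z)
    (hhub : ∀ z ∈ Metric.sphere (0:ℂ) 1, h z ≤ 2 * K)
    (hlip : ∀ z ∈ Metric.sphere (0:ℂ) 1, ∀ w ∈ Metric.sphere (0:ℂ) 1,
      |h z - h w| ≤ K * ψ ‖z - w‖)
    (ξ : ℂ) (hξ : ξ ∈ Metric.sphere (0:ℂ) 1)
    (lam : ℝ)
    (hlamdef : lam = sInf {u : ℝ | u ∈ Set.Icc (0:ℝ) 1 ∧ ψ u = h ξ / (2 * K)})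
    (hlampos : 0 < lam) :
    ∀ ζ ∈ Metric.sphere (0:ℂ) 1, lam ≤ ‖ζ - ξ‖ → h ξ ≤ h ζ →
      Real.log (h ζ / h ξ) ≤ Real.log (‖ξ - ζ‖ / (2 * lam) + 1) := by
  have hKpos : (0:ℝ) < K := lt_of_lt_of_le one_pos hK
  set S : Set ℝ := {u : ℝ | u ∈ Set.Icc (0:ℝ) 1 ∧ ψ u = h ξ / (2 * K)} with hS
  -- S nonempty via IVT
  have hc01 : h ξ / (2 * K) ∈ Set.Icc (0:ℝ) 1 := by
    constructor
    · exact div_nonneg (hhnn ξ hξ) (by linarith)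
    · rw [div_le_one (by linarith)]
      simpa using hhub ξ hξ
  have hsub : Set.Icc (0:ℝ) 1 ⊆ Set.Icc (0:ℝ) 2 := Set.Icc_subset_Icc le_rfl one_le_two
  have hne : S.Nonempty := by
    have := intermediate_value_Icc (by norm_num : (0:ℝ) ≤ 1) (hcont.mono hsub)
    rw [h0, h1] at this
    obtain ⟨u, hu, hψu⟩ := this hc01
    exact ⟨u, hu, hψu⟩
  have hSclosed : IsClosed S := by
    have : S = Set.Icc (0:ℝ) 1 ∩ ψ ⁻¹' {h ξ / (2 * K)} := rfl
    rw [this]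
    exact ContinuousOn.preimage_isClosed_of_isClosed (hcont.mono hsub)
      isClosed_Icc isClosed_singleton
  have hbdd : BddBelow S := ⟨0, fun u hu => hu.1.1⟩
  have hlamS : lam ∈ S := hlamdef ▸ hSclosed.csInf_mem hne hbdd
  have hψlam : ψ lam = h ξ / (2 * K) := hlamS.2
  have hlam1 : lam ≤ 1 := hlamS.1.2
  -- h ξ > 0
  have hξpos : 0 < h ξ := by
    rcases lt_or_eq_of_le (hhnn ξ hξ) with hp | hp
    · exact hp
    · exfalso
      have : (0:ℝ) ∈ S := ⟨⟨le_rfl, zero_le_one⟩, by rw [h0, ← hp]; ring⟩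
      have : lam ≤ 0 := hlamdef ▸ csInf_le hbdd this
      linarith
  intro ζ hζ hd hhle
  set d : ℝ := ‖ζ - ξ‖ with hdd
  have hdpos : 0 < d := lt_of_lt_of_le hlampos hd
  have hd2 : d ≤ 2 := by
    have h1 : ‖ζ‖ = 1 := by simpa using hζ
    have h2 : ‖ξ‖ = 1 := by simpa using hξ
    calc d ≤ ‖ζ‖ + ‖ξ‖ := norm_sub_le _ _
    _ = 2 := by rw [h1, h2]; norm_num
  have hratio : ψ d / d ≤ ψ lam / lam := hdec lam d hlampos hd hd2
  have hψd : ψ d ≤ ψ lam * d / lam := by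
    rw [le_div_iff₀ hlampos]
    rw [div_le_div_iff₀ hdpos hlampos] at hratio
    exact hratio
  have key : h ζ ≤ h ξ * (d / (2 * lam) + 1) := by
    have h1 : h ζ - h ξ ≤ K * ψ d := by
      have := hlip ζ hζ ξ hξ
      calc h ζ - h ξ ≤ |h ζ - h ξ| := le_abs_self _
      _ ≤ K * ψ ‖ζ - ξ‖ := this
    have h2 : K * ψ d ≤ K * (ψ lam * d / lam) :=
      mul_le_mul_of_nonneg_left hψd (le_of_lt hKpos)
    have h3 : K * (ψ lam * d / lam) = h ξ * (d / (2 * lam)) := by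
      rw [hψlam]; field_simp
    nlinarith
  have hle : h ζ / h ξ ≤ ‖ξ - ζ‖ / (2 * lam) + 1 := by
    rw [div_le_iff₀ hξpos, norm_sub_rev]
    calc h ζ ≤ h ξ * (d / (2 * lam) + 1) := key
    _ = (d / (2 * lam) + 1) * h ξ := by ring
  have hpos : 0 < h ζ / h ξ := div_pos (lt_of_lt_of_le hξpos hhle) hξpos
  exact Real.log_le_log hpos hle
end
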